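/- Let $v$ be a Schwartz function on $\mathbb{R}^2$. Define the extended Wigner transform $\tilde{W}F(x,y) = (2\pi)^{-1/2} \int_{\mathbb{R}} e^{ipy} F\big(\tfrac{x+p}{\sqrt{2}}, \tfrac{x-p}{\sqrt{2}}\big)\, dp$ and the partial Fourier transform $\mathcal{F}_2 F(x,y) = (2\pi)^{-1/2} \int_{\mathbb{R}} e^{-ipy} F(x,p)\, dp$. Let $u(t,x,y) = (2\pi)^{-1} (\sin t)^{-1} \iint_{\mathbb{R}^2} v(a,b) \exp\big( i\,\frac{(xy+ab)\cos t - (ay+xb)}{\sin t} \big)\, da\, db$ be the gyrator transform of $v$. Then for all $(x,y) \in \mathbb{R}^2$: $u(\pi/4, x, y) = \tilde{W}(\mathcal{F}_2 v)(x, -y)$. -/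

import Mathlib

noncomputable section

open MeasureTheory

/-- The extended Wigner transform
`W̃F(x,y) = (2π)^{-1/2} ∫ e^{ipy} F((x+p)/√2, (x-p)/√2) dp`. -/
def extWigner (F : ℝ × ℝ → ℂ) (x y : ℝ) : ℂ :=
  ((Real.sqrt (2 * Real.pi))⁻¹ : ℝ) *
    ∫ p : ℝ, Complex.exp (Complex.I * (p : ℂ) * (y : ℂ)) *
      F ((x + p) / Real.sqrt 2, (x - p) / Real.sqrt 2)

/-- The (renormalized) partial Fourier transform in the second variable
`𝓕₂F(x,y) = (2π)^{-1/2} ∫ e^{-ipy} F(x,p) dp`. -/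
def partialFourier2 (F : ℝ × ℝ → ℂ) (x y : ℝ) : ℂ :=
  ((Real.sqrt (2 * Real.pi))⁻¹ : ℝ) *
    ∫ p : ℝ, Complex.exp (-(Complex.I * (p : ℂ) * (y : ℂ))) * F (x, p)

/-- The gyrator transform of `v` at time `t`:
`u(t,x,y) = (2π)⁻¹(sin t)⁻¹ ∬ v(a,b) e^{i((xy+ab)cos t - (ay+xb))/sin t} da db`. -/
def gyrator (v : SchwartzMap (ℝ × ℝ) ℂ) (t x y : ℝ) : ℂ :=
  ((2 * Real.pi)⁻¹ : ℝ) * (((Real.sin t)⁻¹ : ℝ) : ℂ) *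
    ∫ q : ℝ × ℝ, v q * Complex.exp (Complex.I *
      ((((x : ℂ) * y + (q.1 : ℂ) * q.2) * ((Real.cos t : ℝ) : ℂ) -
        ((q.1 : ℂ) * y + (x : ℂ) * q.2)) / ((Real.sin t : ℝ) : ℂ)))

/-- At `t = π/4` the gyrator transform is the extended Wigner transform of the partial
Fourier transform: `u(π/4, x, y) = W̃(𝓕₂v)(x, -y)`. -/
theorem gyrator_pi_div_four_eq_extWigner_partialFourier
    (v : SchwartzMap (ℝ × ℝ) ℂ) (x y : ℝ) :
    gyrator v (Real.pi / 4) x y =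
      extWigner (fun q => partialFourier2 (fun r => v r) q.1 q.2) x (-y) := by
  have hs2 : Real.sqrt 2 * Real.sqrt 2 = 2 := Real.mul_self_sqrt (by norm_num)
  have hspos : (0:ℝ) < Real.sqrt 2 := Real.sqrt_pos.mpr (by norm_num)
  have hs0 : Real.sqrt 2 ≠ 0 := ne_of_gt hspos
  have hs2c : (Real.sqrt 2 : ℂ) * (Real.sqrt 2 : ℂ) = 2 := by exact_mod_cast hs2
  have hsc0 : ((Real.sqrt 2 : ℝ) : ℂ) ≠ 0 := by exact_mod_cast hs0
  have hc0 : ((Real.sqrt 2 / 2 : ℝ) : ℂ) ≠ 0 := by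
    simp only [ne_eq, Complex.ofReal_eq_zero]
    positivity
  -- the common integrand
  set f : ℝ × ℝ → ℂ := fun q =>
    v q * Complex.exp (Complex.I *
      ((x * y + q.1 * q.2 - Real.sqrt 2 * (q.1 * y + x * q.2) : ℝ) : ℂ)) with hf
  have hnorm : ∀ q, ‖f q‖ = ‖v q‖ := by
    intro q
    rw [hf]
    simp only
    rw [norm_mul, mul_comm Complex.I,
      Complex.norm_exp_ofReal_mul_I, mul_one]
  have hcont : Continuous f := by
    rw [hf]
    apply v.continuous.mul
    apply Complex.continuous_exp.comp
    fun_prop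
  have hInt : Integrable f (volume : Measure (ℝ × ℝ)) := by
    refine Integrable.mono' (v.integrable (μ := volume)).norm
      hcont.aestronglyMeasurable ?_
    filter_upwards with q
    rw [hnorm]
  -- left hand side
  have hL : gyrator v (Real.pi / 4) x y
      = ((2 * Real.pi)⁻¹ : ℝ) * ((Real.sqrt 2 : ℝ) : ℂ) * ∫ q : ℝ × ℝ, f q := by
    rw [gyrator, Real.sin_pi_div_four, Real.cos_pi_div_four]
    have h1 : ((Real.sqrt 2 / 2)⁻¹ : ℝ) = Real.sqrt 2 := by
      rw [inv_div, div_eq_iff hs0]; linarith [hs2]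
    rw [h1]
    congr 1
    refine integral_congr_ae (Filter.Eventually.of_forall fun q => ?_)
    rw [hf]
    simp only
    have harg : (((x : ℂ) * y + (q.1 : ℂ) * q.2) * ((Real.sqrt 2 / 2 : ℝ) : ℂ) -
          ((q.1 : ℂ) * y + (x : ℂ) * q.2)) / ((Real.sqrt 2 / 2 : ℝ) : ℂ)
        = ((x * y + q.1 * q.2 - Real.sqrt 2 * (q.1 * y + x * q.2) : ℝ) : ℂ) := by
      rw [div_eq_iff hc0]
      push_cast
      linear_combination ((q.1 : ℂ) * y + (x : ℂ) * q.2) / 2 * hs2c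
    rw [harg]
  -- auxiliary function for the right hand side
  set g : ℝ → ℂ := fun p =>
    Complex.exp (Complex.I * (p : ℂ) * ((-y : ℝ) : ℂ)) *
      ∫ b : ℝ, Complex.exp (-(Complex.I * (b : ℂ) * (((x - p) / Real.sqrt 2 : ℝ) : ℂ))) *
        v ((x + p) / Real.sqrt 2, b) with hgdef
  -- pointwise computation after change of variables
  have hpt : ∀ a : ℝ, g (Real.sqrt 2 * a - x) = ∫ b : ℝ, f (a, b) := by
    intro a
    have e1 : (x + (Real.sqrt 2 * a - x)) / Real.sqrt 2 = a := by
      field_simp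
      ring
    have e2 : (x - (Real.sqrt 2 * a - x)) / Real.sqrt 2 = Real.sqrt 2 * x - a := by
      rw [div_eq_iff hs0]
      linear_combination (-x) * hs2
    rw [hgdef]
    simp only
    rw [e1, e2, ← integral_const_mul]
    refine integral_congr_ae (Filter.Eventually.of_forall fun b => ?_)
    rw [hf]
    simp only
    rw [show Complex.exp (Complex.I * ((Real.sqrt 2 * a - x : ℝ) : ℂ) * ((-y : ℝ) : ℂ)) *
        (Complex.exp (-(Complex.I * (b : ℂ) * ((Real.sqrt 2 * x - a : ℝ) : ℂ))) * v (a, b))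
        = v (a, b) * (Complex.exp (Complex.I * ((Real.sqrt 2 * a - x : ℝ) : ℂ) * ((-y : ℝ) : ℂ)) *
          Complex.exp (-(Complex.I * (b : ℂ) * ((Real.sqrt 2 * x - a : ℝ) : ℂ)))) by ring,
      ← Complex.exp_add]
    congr 1
    push_cast
    ring
  -- change of variables
  have hsub : (∫ p : ℝ, g p) = ((Real.sqrt 2 : ℝ) : ℂ) * ∫ a : ℝ, g (Real.sqrt 2 * a - x) := by
    have h1 : (∫ a : ℝ, g (Real.sqrt 2 * a - x))
        = |(Real.sqrt 2)⁻¹| • ∫ u : ℝ, g (u - x) :=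
      Measure.integral_comp_mul_left (fun u => g (u - x)) (Real.sqrt 2)
    have h2 : (∫ u : ℝ, g (u - x)) = ∫ u : ℝ, g u :=
      integral_sub_right_eq_self g x
    rw [h1, h2, abs_of_pos (inv_pos.mpr hspos), Complex.real_smul, Complex.ofReal_inv,
      ← mul_assoc, mul_inv_cancel₀ hsc0, one_mul]
  -- iterated integral equals the product integral
  have hiter : (∫ a : ℝ, ∫ b : ℝ, f (a, b)) = ∫ q : ℝ × ℝ, f q := by
    have hInt' : Integrable (Function.uncurry fun a b => f (a, b))
        ((volume : Measure ℝ).prod (volume : Measure ℝ)) := by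
      have := hInt
      rw [Measure.volume_eq_prod] at this
      exact this
    have := MeasureTheory.integral_integral (f := fun a b => f (a, b)) hInt'
    rw [this, ← Measure.volume_eq_prod]
  -- right hand side
  have hR : extWigner (fun q => partialFourier2 (fun r => v r) q.1 q.2) x (-y)
      = ((2 * Real.pi)⁻¹ : ℝ) * ((Real.sqrt 2 : ℝ) : ℂ) * ∫ q : ℝ × ℝ, f q := by
    rw [extWigner]
    simp only [partialFourier2]
    have step1 : (fun p : ℝ => Complex.exp (Complex.I * (p : ℂ) * ((-y : ℝ) : ℂ)) *
        (((Real.sqrt (2 * Real.pi))⁻¹ : ℝ) *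
          ∫ b : ℝ, Complex.exp (-(Complex.I * (b : ℂ) * (((x - p) / Real.sqrt 2 : ℝ) : ℂ))) *
            v ((x + p) / Real.sqrt 2, b)))
        = fun p : ℝ => (((Real.sqrt (2 * Real.pi))⁻¹ : ℝ) : ℂ) * g p := by
      funext p
      rw [hgdef]
      ring
    rw [step1, integral_const_mul, ← mul_assoc]
    have hcc : ((((Real.sqrt (2 * Real.pi))⁻¹ : ℝ)) : ℂ) * ((((Real.sqrt (2 * Real.pi))⁻¹ : ℝ)) : ℂ)
        = (((2 * Real.pi)⁻¹ : ℝ) : ℂ) := by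
      rw [← Complex.ofReal_mul, ← mul_inv,
        Real.mul_self_sqrt (by positivity : (0:ℝ) ≤ 2 * Real.pi)]
    rw [hcc, hsub, ← mul_assoc, ← hiter]
    congr 1
    exact integral_congr_ae (Filter.Eventually.of_forall fun a => hpt a)
  rw [hL, hR]
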